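/- Let b ≥ 2 and let f : ℕ → Ω be a partial function defined on [0, b) such that for ε ∈ {0,1}, f(n) = ε if and only if n = ε. Define O_f^b as above. Then for all n: b divides n if and only if Ω divides O_f^b(n), and b² divides n if and only if Ω² divides O_f^b(n). -/

import Mathlib

/-- `Ω`, the first uncountable ordinal. -/
noncomputable def Omega : Ordinal := (Cardinal.aleph 1).ord

/-- `n =_b b^e·a + r` is the `b`-decomposition of `n`. -/
def BDecomp (b n e a r : ℕ) : Prop :=
  n = b ^ e * a + r ∧ b ^ e ≤ n ∧ n < b ^ (e + 1) ∧ 0 < a ∧ a < b ∧ r < b ^ e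

lemma Omega_pos : 0 < Omega := by
  rw [Omega, Cardinal.lt_ord]
  simpa using (Cardinal.aleph0_le_aleph 1).trans_lt' Cardinal.aleph0_pos

lemma one_lt_Omega : 1 < Omega := by
  rw [Omega, Cardinal.lt_ord]
  simpa using Cardinal.one_lt_aleph0.trans_le (Cardinal.aleph0_le_aleph 1)

lemma Omega_isLimit : Order.IsSuccLimit Omega := Cardinal.isSuccLimit_ord (Cardinal.aleph0_le_aleph 1)

lemma ord_dvd_add_right {d x y : Ordinal} (h : d ∣ x) : d ∣ x + y ↔ d ∣ y := by
  rcases eq_or_ne d 0 with rfl | hd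
  · rw [zero_dvd_iff] at h; subst h; rw [zero_add]
  constructor
  · rintro ⟨γ, hγ⟩
    obtain ⟨α, rfl⟩ := h
    have hle : α ≤ γ := by
      have h1 : d * α ≤ d * γ := hγ ▸ le_self_add
      refine le_of_not_gt fun hlt => ?_
      exact ((mul_lt_mul_iff_of_pos_left (pos_iff_ne_zero.2 hd)).2 hlt).not_ge h1
    refine ⟨γ - α, ?_⟩
    have h2 : d * α + d * (γ - α) = d * γ := by
      rw [← mul_add, Ordinal.add_sub_cancel_of_le hle]
    rw [← h2] at hγ
    exact (add_left_cancel_iff.1 hγ)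
  · rintro ⟨β, rfl⟩
    obtain ⟨α, rfl⟩ := h
    exact ⟨α + β, (mul_add _ _ _).symm⟩

lemma ord_eq_zero_of_dvd_of_lt {d x : Ordinal} (h : d ∣ x) (hx : x < d) : x = 0 := by
  obtain ⟨α, rfl⟩ := h
  by_contra hne
  have hα : α ≠ 0 := by rintro rfl; simp at hne
  have h1 : d * 1 ≤ d * α := mul_le_mul_right (Ordinal.one_le_iff_ne_zero.2 hα) d
  rw [mul_one] at h1
  exact absurd hx h1.not_gt

lemma omega_dvd_opow {ξ : Ordinal} (h : 1 ≤ ξ) : Omega ∣ Omega ^ ξ := by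
  conv_rhs => rw [← Ordinal.add_sub_cancel_of_le h, Ordinal.opow_add, Ordinal.opow_one]
  exact ⟨_, rfl⟩

lemma omega2_dvd_opow {ξ : Ordinal} (h : 2 ≤ ξ) : Omega ^ 2 ∣ Omega ^ ξ := by
  have h2 : Omega ^ (2 : ℕ) = Omega ^ (2 : Ordinal) := by
    rw [← Ordinal.opow_natCast]; norm_num
  rw [h2]
  conv_rhs => rw [← Ordinal.add_sub_cancel_of_le h, Ordinal.opow_add]
  exact ⟨_, rfl⟩

lemma Omega_le_sq : Omega ≤ Omega ^ 2 := by
  rw [pow_two]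
  calc Omega = Omega * 1 := (mul_one _).symm
    _ ≤ Omega * Omega := mul_le_mul_right one_lt_Omega.le _

/-- if `f` maps `[0,b)` into `Ω` and satisfies `f(n) = ε ↔ n = ε`
for `ε ∈ {0,1}`, then for all `n`: `b ∣ n ↔ Ω ∣ O_f^b(n)` and
`b² ∣ n ↔ Ω² ∣ O_f^b(n)`. -/
theorem stmt2 (b : ℕ) (hb : 2 ≤ b) (f : ℕ → Ordinal)
    (hfOm : ∀ n < b, f n < Omega)
    (hf01 : ∀ n < b, (f n = 0 ↔ n = 0) ∧ (f n = 1 ↔ n = 1))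
    (O : ℕ → Ordinal)
    (hOsmall : ∀ n < b, O n = f n)
    (hObig : ∀ n e a r, b ≤ n → BDecomp b n e a r →
      O n = Omega ^ O e * f a + O r) :
    ∀ n : ℕ, ((b ∣ n) ↔ Omega ∣ O n) ∧ ((b ^ 2 ∣ n) ↔ Omega ^ 2 ∣ O n) := by
  have hb1 : 1 < b := hb
  -- the canonical decomposition
  have hdecomp : ∀ n, b ≤ n →
      BDecomp b n (Nat.log b n) (n / b ^ Nat.log b n) (n % b ^ Nat.log b n) := by
    intro n hn
    set e := Nat.log b n with he
    have hn0 : n ≠ 0 := by omega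
    have hpowpos : 0 < b ^ e := Nat.pow_pos (n := e) (by omega)
    have hple : b ^ e ≤ n := Nat.pow_log_le_self b hn0
    have hplt : n < b ^ (e + 1) := Nat.lt_pow_succ_log_self hb1 n
    refine ⟨(Nat.div_add_mod n (b ^ e)).symm, hple, hplt, Nat.div_pos hple hpowpos, ?_,
      Nat.mod_lt _ hpowpos⟩
    rw [Nat.div_lt_iff_lt_mul hpowpos]
    calc n < b ^ (e + 1) := hplt
      _ = b * b ^ e := by ring
  -- O is nonzero away from 0
  have hOne : ∀ m : ℕ, m ≠ 0 → O m ≠ 0 := by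
    intro m hm
    rcases lt_or_ge m b with hmb | hmb
    · rw [hOsmall m hmb]
      exact fun h => hm (((hf01 m hmb).1).1 h)
    · obtain ⟨heq, _, _, ha0, hab, _⟩ := hdecomp m hmb
      rw [hObig m _ _ _ hmb (hdecomp m hmb)]
      intro h
      have h1 : Omega ^ O (Nat.log b m) * f (m / b ^ Nat.log b m) ≤ 0 :=
        h ▸ le_self_add
      have h2 : f (m / b ^ Nat.log b m) ≠ 0 := fun hf =>
        (by omega : ¬ (m / b ^ Nat.log b m = 0)) (((hf01 _ hab).1).1 hf)
      have h3 : Omega ^ O (Nat.log b m) * f (m / b ^ Nat.log b m) ≠ 0 :=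
        mul_ne_zero (Ordinal.opow_ne_zero _ Omega_pos.ne') h2
      exact h3 (le_antisymm h1 (zero_le (a := _)))
  -- O is at least Ω on [b, ∞)
  have hOomega : ∀ m : ℕ, b ≤ m → Omega ≤ O m := by
    intro m hmb
    obtain ⟨heq, _, _, ha0, hab, _⟩ := hdecomp m hmb
    rw [hObig m _ _ _ hmb (hdecomp m hmb)]
    have he0 : Nat.log b m ≠ 0 := by
      have : b ^ 1 ≤ m := by simpa using hmb
      have := (Nat.le_log_iff_pow_le hb1 (by omega)).2 this
      omega
    have hOe : 1 ≤ O (Nat.log b m) := Ordinal.one_le_iff_ne_zero.2 (hOne _ he0)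
    have hfa : 1 ≤ f (m / b ^ Nat.log b m) := Ordinal.one_le_iff_ne_zero.2 (fun hf =>
      (by omega : ¬ (m / b ^ Nat.log b m = 0)) (((hf01 _ hab).1).1 hf))
    calc Omega = Omega ^ (1 : Ordinal) := (Ordinal.opow_one _).symm
      _ ≤ Omega ^ O (Nat.log b m) := Ordinal.opow_le_opow_right Omega_pos hOe
      _ = Omega ^ O (Nat.log b m) * 1 := (mul_one _).symm
      _ ≤ Omega ^ O (Nat.log b m) * f (m / b ^ Nat.log b m) := mul_le_mul_right hfa _
      _ ≤ _ := le_self_add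
  -- O m = 1 only for m = 1
  have hOone : ∀ m : ℕ, O m = 1 → m = 1 := by
    intro m hm
    rcases lt_or_ge m b with hmb | hmb
    · rw [hOsmall m hmb] at hm
      exact ((hf01 m hmb).2).1 hm
    · exact absurd (hm ▸ hOomega m hmb) one_lt_Omega.not_ge
  intro n
  induction n using Nat.strong_induction_on with
  | _ n ih =>
  rcases lt_or_ge n b with hnb | hnb
  · -- small case
    rw [hOsmall n hnb]
    constructor
    · constructor
      · intro h
        have : n = 0 := Nat.eq_zero_of_dvd_of_lt h hnb
        subst this
        rw [((hf01 0 hnb).1).2 rfl]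
        exact dvd_zero _
      · intro h
        have h0 : f n = 0 := ord_eq_zero_of_dvd_of_lt h (hfOm n hnb)
        have : n = 0 := ((hf01 n hnb).1).1 h0
        subst this; exact dvd_zero b
    · constructor
      · intro h
        have hlt : n < b ^ 2 := lt_of_lt_of_le hnb (Nat.le_self_pow (by norm_num) b)
        have : n = 0 := Nat.eq_zero_of_dvd_of_lt h hlt
        subst this
        rw [((hf01 0 hnb).1).2 rfl]
        exact dvd_zero _
      · intro h
        have h0 : f n = 0 :=
          ord_eq_zero_of_dvd_of_lt h ((hfOm n hnb).trans_le Omega_le_sq)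
        have : n = 0 := ((hf01 n hnb).1).1 h0
        subst this; exact dvd_zero _
  · -- big case
    obtain hd := hdecomp n hnb
    set e := Nat.log b n with he
    set a := n / b ^ e with ha
    set r := n % b ^ e with hr
    obtain ⟨heq, hple, hplt, ha0, hab, hrlt⟩ := hd
    have hOn := hObig n e a r hnb (hdecomp n hnb)
    have hn0 : n ≠ 0 := by omega
    have he1 : 1 ≤ e := by
      have : b ^ 1 ≤ n := by simpa using hnb
      exact (Nat.le_log_iff_pow_le hb1 hn0).2 this
    have hbpow : (2:ℕ) ^ e ≤ b ^ e := Nat.pow_le_pow_left hb e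
    have hen : e < n := lt_of_lt_of_le (Nat.lt_two_pow_self (n := e)) (le_trans hbpow hple)
    have hrn : r < n := lt_of_lt_of_le hrlt hple
    have hfa0 : f a ≠ 0 := fun hf => (by omega : ¬ (a = 0)) (((hf01 a hab).1).1 hf)
    have hOe1 : 1 ≤ O e := Ordinal.one_le_iff_ne_zero.2 (hOne e (by omega))
    have hOmdvd : Omega ∣ Omega ^ O e * f a :=
      (omega_dvd_opow hOe1).mul_right _
    have hbd : b ∣ b ^ e * a := dvd_mul_of_dvd_left (dvd_pow_self b (by omega)) a
    constructor
    · rw [hOn]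
      calc b ∣ n ↔ b ∣ b ^ e * a + r := by rw [← heq]
        _ ↔ b ∣ r := Nat.dvd_add_right hbd
        _ ↔ Omega ∣ O r := (ih r hrn).1
        _ ↔ Omega ∣ Omega ^ O e * f a + O r := (ord_dvd_add_right hOmdvd).symm
    · rcases eq_or_lt_of_le he1 with he1' | he2
      · -- e = 1 : both sides false
        have he1'' : e = 1 := he1'.symm
        have hOe : O e = 1 := by
          rw [he1'', hOsmall 1 hb1, ((hf01 1 hb1).2).2 rfl]
        have hnlt : n < b ^ 2 := by
          calc n < b ^ (e + 1) := hplt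
            _ = b ^ 2 := by rw [he1'']
        have hrb : r < b := by
          calc r < b ^ e := hrlt
            _ = b := by rw [he1'', pow_one]
        have hOr : O r = f r := hOsmall r hrb
        have hOnlt : O n < Omega ^ 2 := by
          rw [hOn, hOe, Ordinal.opow_one, pow_two]
          calc Omega * f a + O r < Omega * f a + Omega := by
                rw [hOr]
                exact add_lt_add_right (hfOm r hrb) _
            _ = Omega * (f a + 1) := by rw [mul_add, mul_one]
            _ ≤ Omega * Omega := by
                refine mul_le_mul_right ?_ _
                rw [Ordinal.add_one_eq_succ]
                exact Order.succ_le_of_lt (hfOm a hab)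
        constructor
        · intro h
          exfalso
          exact hn0 (Nat.eq_zero_of_dvd_of_lt h hnlt)
        · intro h
          exact absurd (ord_eq_zero_of_dvd_of_lt h hOnlt) (hOne n hn0)
      · -- e ≥ 2
        have hOe2 : (2 : Ordinal) ≤ O e := by
          rcases lt_or_ge 1 (O e) with h1 | h1
          · rw [show (2 : Ordinal) = 1 + 1 by norm_num, Ordinal.add_one_eq_succ]
            exact Order.succ_le_of_lt h1
          · exfalso
            have : O e = 1 := le_antisymm h1 hOe1
            have := hOone e this
            omega
        have hOm2dvd : Omega ^ 2 ∣ Omega ^ O e * f a :=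
          (omega2_dvd_opow hOe2).mul_right _
        have hbd2 : b ^ 2 ∣ b ^ e * a :=
          dvd_mul_of_dvd_left (pow_dvd_pow b (by omega)) a
        rw [hOn]
        calc b ^ 2 ∣ n ↔ b ^ 2 ∣ b ^ e * a + r := by rw [← heq]
          _ ↔ b ^ 2 ∣ r := Nat.dvd_add_right hbd2
          _ ↔ Omega ^ 2 ∣ O r := (ih r hrn).2
          _ ↔ Omega ^ 2 ∣ Omega ^ O e * f a + O r := (ord_dvd_add_right hOm2dvd).symm
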